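/- Let n ≥ 2, let K be a compact subset of ℝⁿ, and let f : K → ℝᵐ be continuous. For every ε > 0 there exists a radial neural network whose hidden layers all use the Step-ReLU activation, with 2·M(f, K, ε/2) hidden layers whose widths are all equal to max(n, m) (input width n, output width m), whose feedforward function F : ℝⁿ → ℝᵐ satisfies |F(x) − f(x)| < ε for all x ∈ K. -/

import Mathlib

open scoped Classical
open Metric Set

noncomputable section

abbrev Euc (n : ℕ) := EuclideanSpace ℝ (Fin n)

def mulVecE {m n : ℕ} (W : Matrix (Fin m) (Fin n) ℝ) (v : Euc n) : Euc m :=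
  WithLp.toLp 2 (fun j => ∑ k, W j k * v k)

/-- Step-ReLU on ℝⁿ: the radial rescaling function sending v to v if ‖v‖ ≥ 1
and to 0 if ‖v‖ < 1. -/
def stepReLU {n : ℕ} (v : Euc n) : Euc n := if 1 ≤ ‖v‖ then v else 0

/-- N witnesses the covering property for f on K at scale ε: there are points
c₁, …, c_N ∈ K and radii r₁, …, r_N ∈ (0,1) such that the balls B_{rᵢ}(cᵢ)
cover K and f(B_{rᵢ}(cᵢ) ∩ K) ⊆ B_ε(f cᵢ) for all i. -/
def IsCoverSize {n m : ℕ} (f : Euc n → Euc m) (K : Set (Euc n)) (ε : ℝ) (N : ℕ) : Prop :=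
  ∃ (c : Fin N → Euc n) (r : Fin N → ℝ),
    (∀ i, c i ∈ K) ∧ (∀ i, r i ∈ Set.Ioo (0:ℝ) 1) ∧
    (K ⊆ ⋃ i, Metric.ball (c i) (r i)) ∧
    (∀ i, f '' (Metric.ball (c i) (r i) ∩ K) ⊆ Metric.ball (f (c i)) ε)

/-- N(f, K, ε): the minimal N as in IsCoverSize. -/
def coverNum {n m : ℕ} (f : Euc n → Euc m) (K : Set (Euc n)) (ε : ℝ) : ℕ :=
  sInf {N | IsCoverSize f K ε N}

/-- M witnesses the separated covering property for f on K at scale ε: as in the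
covering property, with the additional condition that ‖cᵢ − cⱼ‖ ≥ rᵢ for i ≠ j. -/
def IsPackedCoverSize {n m : ℕ} (f : Euc n → Euc m) (K : Set (Euc n)) (ε : ℝ) (M : ℕ) : Prop :=
  ∃ (c : Fin M → Euc n) (r : Fin M → ℝ),
    (∀ i, c i ∈ K) ∧ (∀ i, r i ∈ Set.Ioo (0:ℝ) 1) ∧
    (K ⊆ ⋃ i, Metric.ball (c i) (r i)) ∧
    (∀ i, f '' (Metric.ball (c i) (r i) ∩ K) ⊆ Metric.ball (f (c i)) ε) ∧
    (∀ i j, i ≠ j → r i ≤ dist (c i) (c j))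

/-- M(f, K, ε): the minimal M as in IsPackedCoverSize. -/
def packNum {n m : ℕ} (f : Euc n → Euc m) (K : Set (Euc n)) (ε : ℝ) : ℕ :=
  sInf {M | IsPackedCoverSize f K ε M}

/-- Iterating hidden layers of constant width k with Step-ReLU activations:
hiddenStack k W b j maps the output of the first hidden layer through j further
hidden layers. -/
def hiddenStack (k : ℕ) (W : ℕ → Matrix (Fin k) (Fin k) ℝ) (b : ℕ → Euc k) :
    ℕ → Euc k → Euc k
  | 0 => fun v => v
  | (j+1) => fun v => stepReLU (mulVecE (W j) (hiddenStack k W b j v) + b j)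

/-- The feedforward function of a radial neural network with input width n, exactly N
hidden layers all of width k with Step-ReLU activations, and a final affine layer into
ℝᵐ (with identity activation, a radial rescaling function).  For N = 0 the network is
the single affine layer x ↦ A₀ x + c₀; for N ≥ 1 it is
x ↦ A (ρ(W_{N-1} ⋯ ρ(W₀ x + b₀) ⋯ + b_{N-1})) + c. -/
def constNet (n k m N : ℕ)
    (A₀ : Matrix (Fin m) (Fin n) ℝ) (c₀ : Euc m)
    (W₀ : Matrix (Fin k) (Fin n) ℝ) (b₀ : Euc k)
    (W : ℕ → Matrix (Fin k) (Fin k) ℝ) (b : ℕ → Euc k)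
    (A : Matrix (Fin m) (Fin k) ℝ) (c : Euc m) : Euc n → Euc m :=
  match N with
  | 0 => fun x => mulVecE A₀ x + c₀
  | (N+1) => fun x =>
      mulVecE A (hiddenStack k W b N (stepReLU (mulVecE W₀ x + b₀))) + c
namespace UA

lemma step_of_ge {k : ℕ} {v : Euc k} (h : 1 ≤ ‖v‖) : stepReLU v = v := if_pos h

lemma step_of_lt {k : ℕ} {v : Euc k} (h : ‖v‖ < 1) : stepReLU v = 0 := if_neg (not_le.mpr h)

lemma mulVecE_eq {a b : ℕ} (W : Matrix (Fin a) (Fin b) ℝ) (v : Euc b) :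
    mulVecE W v = WithLp.toLp 2 (W.mulVec v) := rfl

lemma mulVecE_mul {a b c : ℕ} (A : Matrix (Fin a) (Fin b) ℝ) (B : Matrix (Fin b) (Fin c) ℝ)
    (v : Euc c) : mulVecE (A * B) v = mulVecE A (mulVecE B v) := by
  simp [mulVecE_eq, Matrix.mulVec_mulVec]

lemma mulVecE_add {a b : ℕ} (A : Matrix (Fin a) (Fin b) ℝ) (u v : Euc b) :
    mulVecE A (u + v) = mulVecE A u + mulVecE A v := by
  exact congrArg (WithLp.toLp 2) (Matrix.mulVec_add A u v)

lemma mulVecE_addM {a b : ℕ} (A B : Matrix (Fin a) (Fin b) ℝ) (v : Euc b) :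
    mulVecE (A + B) v = mulVecE A v + mulVecE B v := by
  exact congrArg (WithLp.toLp 2) (Matrix.add_mulVec A B v)

lemma mulVecE_smulM {a b : ℕ} (t : ℝ) (A : Matrix (Fin a) (Fin b) ℝ) (v : Euc b) :
    mulVecE (t • A) v = t • mulVecE A v := by
  exact congrArg (WithLp.toLp 2) (Matrix.smul_mulVec t A v)

lemma mulVecE_one {a : ℕ} (v : Euc a) : mulVecE (1 : Matrix (Fin a) (Fin a) ℝ) v = v := by
  exact congrArg (WithLp.toLp 2) (Matrix.one_mulVec v.ofLp)

/-- affine map data -/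
def app {a b : ℕ} (p : Matrix (Fin a) (Fin b) ℝ × Euc a) (v : Euc b) : Euc a :=
  mulVecE p.1 v + p.2

def comp {a b c : ℕ} (p : Matrix (Fin c) (Fin b) ℝ × Euc c) (q : Matrix (Fin b) (Fin a) ℝ × Euc b) :
    Matrix (Fin c) (Fin a) ℝ × Euc c :=
  (p.1 * q.1, mulVecE p.1 q.2 + p.2)

lemma app_comp {a b c : ℕ} (p : Matrix (Fin c) (Fin b) ℝ × Euc c)
    (q : Matrix (Fin b) (Fin a) ℝ × Euc b) (v : Euc a) :
    app (comp p q) v = app p (app q v) := by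
  simp [app, comp, mulVecE_mul, mulVecE_add, add_assoc]

/-- chain of stepReLU ∘ affine blocks -/
def blocks {k : ℕ} (g : ℕ → Matrix (Fin k) (Fin k) ℝ × Euc k) (v : Euc k) : ℕ → Euc k
  | 0 => v
  | (j+1) => stepReLU (app (g j) (blocks g v j))

def consP {k : ℕ} (p : Matrix (Fin k) (Fin k) ℝ × Euc k)
    (g : ℕ → Matrix (Fin k) (Fin k) ℝ × Euc k) : ℕ → Matrix (Fin k) (Fin k) ℝ × Euc k :=
  fun j => match j with
  | 0 => p
  | (i+1) => g i

def appendP {k : ℕ} (ga : ℕ → Matrix (Fin k) (Fin k) ℝ × Euc k) (J : ℕ)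
    (gb : ℕ → Matrix (Fin k) (Fin k) ℝ × Euc k) : ℕ → Matrix (Fin k) (Fin k) ℝ × Euc k :=
  fun j => if j < J then ga j else gb (j - J)

lemma blocks_congr {k : ℕ} {g g' : ℕ → Matrix (Fin k) (Fin k) ℝ × Euc k} (v : Euc k) (J : ℕ)
    (h : ∀ j < J, g j = g' j) : blocks g v J = blocks g' v J := by
  induction J with
  | zero => rfl
  | succ j ih =>
    show stepReLU (app (g j) (blocks g v j)) = stepReLU (app (g' j) (blocks g' v j))
    rw [ih (fun i hi => h i (Nat.lt_succ_of_lt hi)), h j (Nat.lt_succ_self j)]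

lemma blocks_cons {k : ℕ} (p : Matrix (Fin k) (Fin k) ℝ × Euc k)
    (g : ℕ → Matrix (Fin k) (Fin k) ℝ × Euc k) (v : Euc k) (j : ℕ) :
    blocks (consP p g) v (j+1) = blocks g (stepReLU (app p v)) j := by
  induction j with
  | zero => rfl
  | succ i ih =>
    show stepReLU (app (consP p g (i+1)) (blocks (consP p g) v (i+1))) = _
    rw [ih]; rfl

lemma blocks_append {k : ℕ} (ga gb : ℕ → Matrix (Fin k) (Fin k) ℝ × Euc k) (v : Euc k)
    (J L : ℕ) : blocks (appendP ga J gb) v (J + L) = blocks gb (blocks ga v J) L := by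
  induction L with
  | zero =>
    show blocks (appendP ga J gb) v J = blocks ga v J
    exact blocks_congr v J (fun j hj => by simp [appendP, hj])
  | succ i ih =>
    show stepReLU (app (appendP ga J gb (J + i)) (blocks (appendP ga J gb) v (J+i))) = _
    rw [ih]
    have : appendP ga J gb (J + i) = gb i := by simp [appendP, Nat.add_sub_cancel_left]
    rw [this]; rfl

lemma hiddenStack_eq_blocks {k : ℕ} (g : ℕ → Matrix (Fin k) (Fin k) ℝ × Euc k) (v : Euc k)
    (j : ℕ) : hiddenStack k (fun i => (g i).1) (fun i => (g i).2) j v = blocks g v j := by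
  induction j with
  | zero => rfl
  | succ i ih =>
    show stepReLU (mulVecE (g i).1 (hiddenStack k _ _ i v) + (g i).2) = _
    rw [ih]; rfl

/-- plain inner product as a sum -/
def inn {k : ℕ} (x y : Euc k) : ℝ := ∑ i, x i * y i

lemma inn_comm {k : ℕ} (x y : Euc k) : inn x y = inn y x := by
  simp [inn, mul_comm]

lemma norm_sq_inn {k : ℕ} (x : Euc k) : ‖x‖ ^ 2 = inn x x := by
  rw [EuclideanSpace.norm_eq, Real.sq_sqrt (by positivity)]
  simp [inn, sq]

lemma inn_self_nonneg {k : ℕ} (x : Euc k) : 0 ≤ inn x x := by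
  rw [← norm_sq_inn]; positivity

lemma norm_eq_sqrt_inn {k : ℕ} (x : Euc k) : ‖x‖ = Real.sqrt (inn x x) := by
  rw [← norm_sq_inn]
  exact (Real.sqrt_sq (norm_nonneg x)).symm

lemma inn_add_left {k : ℕ} (x y z : Euc k) : inn (x + y) z = inn x z + inn y z := by
  simp [inn, add_mul, Finset.sum_add_distrib]

lemma inn_sub_left {k : ℕ} (x y z : Euc k) : inn (x - y) z = inn x z - inn y z := by
  simp [inn, sub_mul, Finset.sum_sub_distrib]

lemma inn_add_right {k : ℕ} (x y z : Euc k) : inn x (y + z) = inn x y + inn x z := by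
  simp [inn, mul_add, Finset.sum_add_distrib]

lemma inn_sub_right {k : ℕ} (x y z : Euc k) : inn x (y - z) = inn x y - inn x z := by
  simp [inn, mul_sub, Finset.sum_sub_distrib]

lemma inn_smul_left {k : ℕ} (t : ℝ) (x y : Euc k) : inn (t • x) y = t * inn x y := by
  simp [inn, Finset.mul_sum]; congr 1; funext i; ring

lemma inn_smul_right {k : ℕ} (t : ℝ) (x y : Euc k) : inn x (t • y) = t * inn x y := by
  simp [inn, Finset.mul_sum]; congr 1; funext i; ring

lemma inn_zero_left {k : ℕ} (y : Euc k) : inn (0 : Euc k) y = 0 := by simp [inn]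

lemma inn_zero_right {k : ℕ} (y : Euc k) : inn y (0 : Euc k) = 0 := by simp [inn]

lemma norm_lt_one_of_inn {k : ℕ} {v : Euc k} (h : inn v v < 1) : ‖v‖ < 1 := by
  nlinarith [norm_sq_inn v, norm_nonneg v]

lemma one_le_norm_of_inn {k : ℕ} {v : Euc k} (h : 1 ≤ inn v v) : 1 ≤ ‖v‖ := by
  nlinarith [norm_sq_inn v, norm_nonneg v]

end UA
namespace UA

lemma euc_add_apply {k : ℕ} (x y : Euc k) (j : Fin k) : (x + y) j = x j + y j := rfl
lemma euc_sub_apply {k : ℕ} (x y : Euc k) (j : Fin k) : (x - y) j = x j - y j := rfl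
lemma euc_smul_apply {k : ℕ} (t : ℝ) (x : Euc k) (j : Fin k) : (t • x) j = t * x j := rfl
lemma euc_zero_apply {k : ℕ} (j : Fin k) : (0 : Euc k) j = 0 := rfl

lemma euc_ext {k : ℕ} {x y : Euc k} (h : ∀ j, x j = y j) : x = y := PiLp.ext h

/-- embedding Euc a → Euc b for a ≤ b -/
def iota {a b : ℕ} (hab : a ≤ b) (x : Euc a) : Euc b :=
  WithLp.toLp 2 (fun j => if h : (j : ℕ) < a then x ⟨j, h⟩ else 0)

lemma inn_iota {a b : ℕ} (hab : a ≤ b) (x y : Euc a) :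
    inn (iota hab x) (iota hab y) = inn x y := by
  unfold inn iota
  rw [Fin.sum_univ_eq_sum_range
    (fun j => (if h : j < a then x ⟨j, h⟩ else 0) * (if h : j < a then y ⟨j, h⟩ else 0)) b]
  rw [← Finset.sum_subset (Finset.range_subset_range.mpr hab)
    (fun i _ hi => by
      have : ¬ i < a := fun h => hi (Finset.mem_range.mpr h)
      simp [this])]
  have : (∑ i : Fin a, x i * y i)
      = ∑ i ∈ Finset.range a,
        (if h : i < a then x ⟨i, h⟩ else 0) * (if h : i < a then y ⟨i, h⟩ else 0) := by
    rw [← Fin.sum_univ_eq_sum_range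
      (fun j => (if h : j < a then x ⟨j, h⟩ else 0) * (if h : j < a then y ⟨j, h⟩ else 0)) a]
    apply Finset.sum_congr rfl
    intro i _
    simp [i.2]
  rw [this]

lemma iota_sub {a b : ℕ} (hab : a ≤ b) (x y : Euc a) :
    iota hab x - iota hab y = iota hab (x - y) := by
  apply euc_ext; intro j
  rw [euc_sub_apply]
  unfold iota
  by_cases h : (j : ℕ) < a
  · simp [h, euc_sub_apply]
  · simp [h]

lemma norm_iota {a b : ℕ} (hab : a ≤ b) (x : Euc a) : ‖iota hab x‖ = ‖x‖ := by
  rw [norm_eq_sqrt_inn, norm_eq_sqrt_inn, inn_iota]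

lemma iota_inj {a b : ℕ} (hab : a ≤ b) {x y : Euc a} (h : iota hab x = iota hab y) : x = y := by
  have : ‖iota hab x - iota hab y‖ = 0 := by rw [h]; simp
  rw [iota_sub, norm_iota] at this
  exact sub_eq_zero.mp (norm_eq_zero.mp this)

/-- matrix of iota -/
def iotaM (a b : ℕ) : Matrix (Fin b) (Fin a) ℝ :=
  fun j l => if (j : ℕ) = (l : ℕ) then 1 else 0

lemma mulVecE_iotaM {a b : ℕ} (hab : a ≤ b) (x : Euc a) :
    mulVecE (iotaM a b) x = iota hab x := by
  apply euc_ext; intro j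
  show (∑ l : Fin a, (if (j : ℕ) = (l : ℕ) then (1:ℝ) else 0) * x l) = _
  unfold iota
  simp only [WithLp.ofLp_toLp]
  by_cases h : (j : ℕ) < a
  · rw [Finset.sum_eq_single (⟨(j : ℕ), h⟩ : Fin a)]
    · simp [h]
    · intro l _ hl
      have : (j : ℕ) ≠ (l : ℕ) := by
        intro he; apply hl; apply Fin.ext; simp [← he]
      simp [this]
    · intro h'; exact absurd (Finset.mem_univ _) h'
  · rw [dif_neg h]
    apply Finset.sum_eq_zero
    intro l _
    have : (j : ℕ) ≠ (l : ℕ) := by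
      intro he; exact h (he ▸ l.2)
    simp [this]

/-- projection Euc b → Euc a for a ≤ b -/
def proj {a b : ℕ} (hab : a ≤ b) (v : Euc b) : Euc a :=
  WithLp.toLp 2 (fun j => v (Fin.castLE hab j))

def projM (b a : ℕ) : Matrix (Fin a) (Fin b) ℝ :=
  fun j l => if (l : ℕ) = (j : ℕ) then 1 else 0

lemma mulVecE_projM {a b : ℕ} (hab : a ≤ b) (v : Euc b) :
    mulVecE (projM b a) v = proj hab v := by
  apply euc_ext; intro j
  show (∑ l : Fin b, (if (l : ℕ) = (j : ℕ) then (1:ℝ) else 0) * v l) = v (Fin.castLE hab j)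
  rw [Finset.sum_eq_single (Fin.castLE hab j)]
  · simp
  · intro l _ hl
    have : (l : ℕ) ≠ (j : ℕ) := by
      intro he; apply hl; apply Fin.ext; simpa using he
    simp [this]
  · intro h'; exact absurd (Finset.mem_univ _) h'

lemma proj_iota {a b : ℕ} (hab : a ≤ b) (x : Euc a) : proj hab (iota hab x) = x := by
  apply euc_ext; intro j
  unfold proj iota
  simp only [WithLp.ofLp_toLp]
  have h : ((Fin.castLE hab j : Fin b) : ℕ) < a := by simpa using j.2
  rw [dif_pos h]
  exact congrArg x.ofLp (Fin.ext rfl)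

lemma proj_sub {a b : ℕ} (hab : a ≤ b) (x y : Euc b) :
    proj hab x - proj hab y = proj hab (x - y) := rfl

lemma norm_proj_le {a b : ℕ} (hab : a ≤ b) (v : Euc b) : ‖proj hab v‖ ≤ ‖v‖ := by
  rw [norm_eq_sqrt_inn, norm_eq_sqrt_inn]
  apply Real.sqrt_le_sqrt
  unfold inn proj
  calc ∑ i : Fin a, v (Fin.castLE hab i) * v (Fin.castLE hab i)
      = ∑ l ∈ Finset.univ.map (Fin.castLEEmb hab), v l * v l := by
        rw [Finset.sum_map]; simp [Fin.castLEEmb]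
    _ ≤ ∑ l : Fin b, v l * v l := by
        apply Finset.sum_le_sum_of_subset_of_nonneg (Finset.subset_univ _)
        intro i _ _
        exact mul_self_nonneg _

end UA
namespace UA

/-- rank-one projector matrix d dᵀ -/
def PMd {k : ℕ} (d : Euc k) : Matrix (Fin k) (Fin k) ℝ := fun j l => d j * d l

lemma mulVecE_PMd {k : ℕ} (d v : Euc k) : mulVecE (PMd d) v = (inn d v) • d := by
  apply euc_ext; intro j
  show (∑ l : Fin k, d j * d l * v l) = inn d v * d j
  simp only [mul_assoc]
  rw [← Finset.mul_sum, inn]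
  ring

def Tgen {k : ℕ} (d : Euc k) (L δ : ℝ) (u : Euc k) : Euc k :=
  (L * inn d u) • d + δ • (u - (inn d u) • d)

def TgenM {k : ℕ} (d : Euc k) (L δ : ℝ) : Matrix (Fin k) (Fin k) ℝ :=
  L • PMd d + δ • ((1 : Matrix (Fin k) (Fin k) ℝ) - PMd d)

lemma mulVecE_subM {a b : ℕ} (A B : Matrix (Fin a) (Fin b) ℝ) (v : Euc b) :
    mulVecE (A - B) v = mulVecE A v - mulVecE B v := by
  exact congrArg (WithLp.toLp 2) (Matrix.sub_mulVec A B v)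

lemma mulVecE_TgenM {k : ℕ} (d : Euc k) (L δ : ℝ) (v : Euc k) :
    mulVecE (TgenM d L δ) v = Tgen d L δ v := by
  unfold TgenM Tgen
  rw [mulVecE_addM, mulVecE_smulM, mulVecE_smulM, mulVecE_subM, mulVecE_one, mulVecE_PMd, smul_smul]

lemma Tgen_sub {k : ℕ} (d : Euc k) (L δ : ℝ) (u v : Euc k) :
    Tgen d L δ (u - v) = Tgen d L δ u - Tgen d L δ v := by
  apply euc_ext; intro j
  simp only [Tgen, inn_sub_right, euc_add_apply, euc_sub_apply, euc_smul_apply]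
  ring

lemma Tgen_zero {k : ℕ} (d : Euc k) (L δ : ℝ) : Tgen d L δ 0 = 0 := by
  apply euc_ext; intro j
  simp only [Tgen, inn_zero_right, euc_add_apply, euc_smul_apply, euc_sub_apply, euc_zero_apply]
  ring

lemma inn_d_Tgen {k : ℕ} {d : Euc k} (hdd : inn d d = 1) (L δ : ℝ) (u : Euc k) :
    inn d (Tgen d L δ u) = L * inn d u := by
  unfold Tgen
  rw [inn_add_right, inn_smul_right, inn_smul_right, inn_sub_right, inn_smul_right, hdd]
  ring

lemma Tgen_comp {k : ℕ} {d : Euc k} (hdd : inn d d = 1) {L δ : ℝ} (hL : L ≠ 0) (hδ : δ ≠ 0)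
    (u : Euc k) : Tgen d L δ (Tgen d L⁻¹ δ⁻¹ u) = u := by
  have h1 : inn d (Tgen d L⁻¹ δ⁻¹ u) = L⁻¹ * inn d u := inn_d_Tgen hdd L⁻¹ δ⁻¹ u
  rw [Tgen, h1]
  apply euc_ext; intro j
  simp only [Tgen, euc_add_apply, euc_smul_apply, euc_sub_apply]
  field_simp
  ring

lemma inn_Tgen_self {k : ℕ} {d : Euc k} (hdd : inn d d = 1) (L δ : ℝ) (u : Euc k) :
    inn (Tgen d L δ u) (Tgen d L δ u)
      = (L * inn d u)^2 + δ^2 * inn (u - (inn d u) • d) (u - (inn d u) • d) := by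
  have hdp : inn d (u - (inn d u) • d) = 0 := by
    rw [inn_sub_right, inn_smul_right, hdd]; ring
  have hpd : inn (u - (inn d u) • d) d = 0 := by rw [inn_comm]; exact hdp
  unfold Tgen
  simp only [inn_add_left, inn_add_right, inn_smul_left, inn_smul_right, hdd, hdp, hpd]
  ring

/-- given a finite set of nonzero vectors, there is a vector with nonzero
inner product with all of them -/
lemma exists_inner_avoid {k : ℕ} (S : Finset (Euc k)) :
    (∀ v ∈ S, v ≠ 0) → ∃ f : Euc k, ∀ v ∈ S, inn f v ≠ 0 := by
  induction S using Finset.induction_on with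
  | empty => exact fun _ => ⟨0, fun v hv => absurd hv (Finset.notMem_empty v)⟩
  | @insert v₀ S hv₀S ih =>
    intro hnz
    obtain ⟨f, hf⟩ := ih (fun v hv => hnz v (Finset.mem_insert_of_mem hv))
    have hv₀ : v₀ ≠ 0 := hnz v₀ (Finset.mem_insert_self _ _)
    have hv₀v₀ : inn v₀ v₀ ≠ 0 := by
      intro h
      apply hv₀
      have : ‖v₀‖ = 0 := by rw [norm_eq_sqrt_inn, h, Real.sqrt_zero]
      exact norm_eq_zero.mp this
    -- bad set of parameters t
    set B : Set ℝ := {t | ∃ v ∈ insert v₀ S, inn (f + t • v₀) v = 0} with hB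
    have hBfin : B.Finite := by
      have : B ⊆ ⋃ v ∈ (insert v₀ S : Finset (Euc k)), {t : ℝ | inn (f + t • v₀) v = 0} := by
        intro t ht
        obtain ⟨v, hv, hinn⟩ := ht
        exact Set.mem_biUnion hv hinn
      apply Set.Finite.subset _ this
      apply Set.Finite.biUnion (Finset.finite_toSet _)
      intro v hv
      apply Set.Subsingleton.finite
      intro t₁ h₁ t₂ h₂
      simp only [Set.mem_setOf_eq, inn_add_left, inn_smul_left] at h₁ h₂
      by_cases hc : inn v₀ v = 0
      · exfalso
        rw [hc, mul_zero, add_zero] at h₁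
        rcases Finset.mem_insert.mp hv with h | h
        · exact hv₀v₀ (h ▸ hc)
        · exact hf v h h₁
      · have := sub_eq_zero.mpr (h₁.trans h₂.symm)
        have h3 : (t₁ - t₂) * inn v₀ v = 0 := by linarith [h₁, h₂]
        rcases mul_eq_zero.mp h3 with h | h
        · linarith [sub_eq_zero.mp h]
        · exact absurd h hc
    obtain ⟨t, _, htB⟩ := Set.infinite_univ.exists_notMem_finite hBfin
    exact ⟨f + t • v₀, fun v hv hinn => htB ⟨v, hv, hinn⟩⟩

/-- basis vector -/
def eb {k : ℕ} (i : Fin k) : Euc k := WithLp.toLp 2 (fun j => if j = i then (1:ℝ) else 0)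

lemma inn_eb {k : ℕ} (v : Euc k) (i : Fin k) : inn v (eb i) = v i := by
  unfold inn eb
  rw [Finset.sum_eq_single i]
  · simp
  · intro l _ hl; simp [hl]
  · intro h; exact absurd (Finset.mem_univ _) h

lemma eb_ne_zero {k : ℕ} (i : Fin k) : (eb i : Euc k) ≠ 0 := by
  intro h
  have := congrFun (congrArg WithLp.ofLp h) i
  simp [eb] at this

/-- in dimension ≥ 2 there is a nonzero vector orthogonal to any given vector -/
lemma exists_perp {k : ℕ} (hk : 2 ≤ k) (g : Euc k) : ∃ e : Euc k, e ≠ 0 ∧ inn g e = 0 := by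
  by_cases hg : g = 0
  · exact ⟨eb ⟨0, by omega⟩, eb_ne_zero _, by simp [hg, inn_zero_left]⟩
  have hgg : inn g g ≠ 0 := by
    intro h
    apply hg
    have : ‖g‖ = 0 := by rw [norm_eq_sqrt_inn, h, Real.sqrt_zero]
    exact norm_eq_zero.mp this
  set i0 : Fin k := ⟨0, by omega⟩
  set i1 : Fin k := ⟨1, by omega⟩
  have key : ∀ i : Fin k, inn g (eb i - (inn g (eb i) / inn g g) • g) = 0 := by
    intro i
    rw [inn_sub_right, inn_smul_right]
    field_simp
    ring
  by_cases h0 : eb i0 - (inn g (eb i0) / inn g g) • g = 0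
  · by_cases h1 : eb i1 - (inn g (eb i1) / inn g g) • g = 0
    · exfalso
      set c0 := inn g (eb i0) / inn g g
      set c1 := inn g (eb i1) / inn g g
      have e0 : (eb i0 : Euc k) = c0 • g := by
        have := sub_eq_zero.mp h0; exact this
      have e1 : (eb i1 : Euc k) = c1 • g := by
        have := sub_eq_zero.mp h1; exact this
      have h00 : (1:ℝ) = c0 * g i0 := by
        have := congrFun (congrArg WithLp.ofLp e0) i0; simpa [eb, euc_smul_apply] using this
      have h10 : (0:ℝ) = c1 * g i0 := by
        have := congrFun (congrArg WithLp.ofLp e1) i0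
        have hne : i0 ≠ i1 := by simp [i0, i1, Fin.ext_iff]
        simpa [eb, hne, euc_smul_apply] using this
      have h11 : (1:ℝ) = c1 * g i1 := by
        have := congrFun (congrArg WithLp.ofLp e1) i1; simpa [eb, euc_smul_apply] using this
      have h01 : (0:ℝ) = c0 * g i1 := by
        have := congrFun (congrArg WithLp.ofLp e0) i1
        have hne : i1 ≠ i0 := by simp [i0, i1, Fin.ext_iff]
        simpa [eb, hne, euc_smul_apply] using this
      nlinarith
    · exact ⟨_, h1, key i1⟩
  · exact ⟨_, h0, key i0⟩

end UA
namespace UA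

/-- choose a new location w near v, avoiding rays through finitely many bad points -/
lemma choose_w {k : ℕ} (hk : 2 ≤ k) (a v : Euc k) {ρ : ℝ} (hρ : 0 < ρ)
    (X : Finset (Euc k)) (ha : a ∉ X) :
    ∃ w : Euc k, dist w v < ρ ∧ w ≠ a ∧
      ∀ z ∈ X, ∀ t ∈ Set.Icc (0:ℝ) 2, z ≠ a + t • (w - a) := by
  -- a functional separating a from the bad points
  have hSnz : ∀ u ∈ X.image (fun z => z - a), u ≠ 0 := by
    intro u hu
    obtain ⟨z, hz, rfl⟩ := Finset.mem_image.mp hu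
    intro h
    exact ha ((sub_eq_zero.mp h) ▸ hz)
  obtain ⟨f, hf⟩ := exists_inner_avoid _ hSnz
  have hf' : ∀ z ∈ X, inn f (z - a) ≠ 0 := by
    intro z hz
    exact hf _ (Finset.mem_image_of_mem _ hz)
  obtain ⟨e, he0, hfe⟩ := exists_perp hk f
  have hne : 0 < ‖e‖ := norm_pos_iff.mpr he0
  set B : Set ℝ := {τ | v + τ • e = a ∨
    ∃ z ∈ X, ∃ t ∈ Set.Icc (0:ℝ) 2, z = a + t • (v + τ • e - a)} with hBdef
  have hBfin : B.Finite := by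
    have hsub : B ⊆ {τ | v + τ • e = a} ∪
        ⋃ z ∈ (X : Set (Euc k)), {τ | ∃ t ∈ Set.Icc (0:ℝ) 2, z = a + t • (v + τ • e - a)} := by
      intro τ hτ
      rcases hτ with h | ⟨z, hz, h⟩
      · exact Or.inl h
      · exact Or.inr (Set.mem_biUnion hz h)
    apply Set.Finite.subset _ hsub
    apply Set.Finite.union
    · apply Set.Subsingleton.finite
      intro τ₁ h₁ τ₂ h₂
      simp only [Set.mem_setOf_eq] at h₁ h₂
      have : (τ₁ - τ₂) • e = 0 := by
        have := h₁.trans h₂.symm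
        have h3 : τ₁ • e = τ₂ • e := by
          have := congrArg (fun y => y - v) this
          simpa [add_sub_cancel_left] using this
        rw [sub_smul, h3, sub_self]
      rcases smul_eq_zero.mp this with h | h
      · linarith [sub_eq_zero.mp (by exact_mod_cast h)]
      · exact absurd h he0
    · apply Set.Finite.biUnion (Finset.finite_toSet X)
      intro z hz
      apply Set.Subsingleton.finite
      intro τ₁ h₁ τ₂ h₂
      obtain ⟨t₁, ht₁, he₁⟩ := h₁
      obtain ⟨t₂, ht₂, he₂⟩ := h₂
      -- t's are nonzero since z ≠ a
      have hza : z ≠ a := fun h => ha (h ▸ hz)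
      have ht₁0 : t₁ ≠ 0 := by
        intro h; rw [h, zero_smul, add_zero] at he₁; exact hza he₁
      have ht₂0 : t₂ ≠ 0 := by
        intro h; rw [h, zero_smul, add_zero] at he₂; exact hza he₂
      have key : ∀ (t τ : ℝ), t ≠ 0 → z = a + t • (v + τ • e - a) →
          v + τ • e - a = t⁻¹ • (z - a) := by
        intro t τ ht h
        have : z - a = t • (v + τ • e - a) := by rw [h]; abel
        rw [this, smul_smul, inv_mul_cancel₀ ht, one_smul]
      have k₁ := key t₁ τ₁ ht₁0 he₁
      have k₂ := key t₂ τ₂ ht₂0 he₂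
      have hsub2 : (τ₁ - τ₂) • e = (t₁⁻¹ - t₂⁻¹) • (z - a) := by
        have := congrArg₂ (fun (p q : Euc k) => p - q) k₁ k₂
        rw [sub_smul, sub_smul]
        calc τ₁ • e - τ₂ • e = (v + τ₁ • e - a) - (v + τ₂ • e - a) := by abel
          _ = t₁⁻¹ • (z - a) - t₂⁻¹ • (z - a) := this
      have hc : t₁⁻¹ - t₂⁻¹ = 0 := by
        by_contra hc
        have h4 := congrArg (fun y => inn f y) hsub2
        simp only [inn_smul_right] at h4
        rw [hfe] at h4
        have : inn f (z - a) = 0 := by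
          have h5 : (t₁⁻¹ - t₂⁻¹) * inn f (z - a) = 0 := by linarith [h4]
          rcases mul_eq_zero.mp h5 with h | h
          · exact absurd h hc
          · exact h
        exact hf' z hz this
      rw [hc, zero_smul] at hsub2
      rcases smul_eq_zero.mp hsub2 with h | h
      · linarith [sub_eq_zero.mp (by exact_mod_cast h)]
      · exact absurd h he0
  have hIoo : (Set.Ioo (0:ℝ) (ρ / ‖e‖)).Infinite := Set.Ioo_infinite (by positivity)
  obtain ⟨τ, hτmem, hτB⟩ := hIoo.exists_notMem_finite hBfin
  refine ⟨v + τ • e, ?_, ?_, ?_⟩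
  · rw [dist_eq_norm]
    have : v + τ • e - v = τ • e := by abel
    rw [this, norm_smul]
    simp only [Real.norm_eq_abs, abs_of_pos hτmem.1]
    calc τ * ‖e‖ < (ρ / ‖e‖) * ‖e‖ := by
          apply mul_lt_mul_of_pos_right hτmem.2 hne
      _ = ρ := by field_simp
  · intro h; exact hτB (Or.inl h)
  · intro z hz t ht h
    exact hτB (Or.inr ⟨z, hz, t, ht, h⟩)

end UA
namespace UA

/-- collapse a thin ellipsoid around the segment from a to w (centered at w) to w,
fixing a finite set Z of points avoiding the symmetric segment -/
lemma collapse_exists {k : ℕ} (w a : Euc k) (hwa : w ≠ a) (Z : Finset (Euc k))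
    (hZ : ∀ z ∈ Z, ∀ t ∈ Set.Icc (0:ℝ) 2, z ≠ a + t • (w - a)) :
    ∃ p₁ p₂ : Matrix (Fin k) (Fin k) ℝ × Euc k,
      app p₂ (stepReLU (app p₁ a)) = w ∧ ∀ z ∈ Z, app p₂ (stepReLU (app p₁ z)) = z := by
  have haw : a - w ≠ 0 := sub_ne_zero.mpr (Ne.symm hwa)
  set nm : ℝ := ‖a - w‖ with hnm
  have hnm0 : 0 < nm := norm_pos_iff.mpr haw
  set d : Euc k := nm⁻¹ • (a - w) with hd
  have hnmd : nm • d = a - w := by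
    rw [hd, smul_smul, mul_inv_cancel₀ (ne_of_gt hnm0), one_smul]
  have hdd : inn d d = 1 := by
    rw [hd, inn_smul_left, inn_smul_right, ← norm_sq_inn, ← hnm]
    field_simp
  clear hd
  clear_value d
  -- the points of Z on the line through w and a
  set lineZ : Finset (Euc k) := Z.filter (fun z => z - w - (inn d (z - w)) • d = 0) with hlineZ
  -- on-line points are strictly beyond the symmetric segment
  have hline : ∀ z ∈ lineZ, nm < |inn d (z - w)| := by
    intro z hz
    obtain ⟨hzZ, hz0⟩ := Finset.mem_filter.mp hz
    by_contra hle
    push_neg at hle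
    set s : ℝ := inn d (z - w) with hs
    have hzline : z = w + s • d := by
      have := sub_eq_zero.mp hz0
      have h2 : z - w = s • d := this
      calc z = w + (z - w) := by abel
        _ = w + s • d := by rw [h2]
    have habs : |s| ≤ nm := hle
    apply hZ z hzZ (1 - s / nm) ⟨by
        rw [sub_nonneg, div_le_one hnm0]
        calc s ≤ |s| := le_abs_self s
          _ ≤ nm := habs, by
        have : -nm ≤ s := by
          calc -nm ≤ -|s| := by linarith
            _ ≤ s := neg_abs_le s
        have h3 : -1 ≤ s / nm := by
          rw [le_div_iff₀ hnm0]; linarith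
        linarith⟩
    rw [hzline]
    have hwa2 : w - a = -(nm • d) := by rw [hnmd]; abel
    have hcoef : (1 - s / nm) * nm = nm - s := by field_simp
    calc w + s • d = a + -((nm - s) • d) := by
          rw [sub_smul, hnmd]; abel
      _ = a + (1 - s / nm) • (w - a) := by
          rw [hwa2, smul_neg, smul_smul, hcoef]
  -- choose the long semi-axis L and the transverse radius δ
  have hLne : (insert (nm + 1) (lineZ.image (fun z => |inn d (z - w)|))).Nonempty :=
    Finset.insert_nonempty _ _
  set L : ℝ := (insert (nm + 1) (lineZ.image (fun z => |inn d (z - w)|))).min' hLne with hLdef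
  have hLgt : nm < L := by
    have hmem := Finset.min'_mem _ hLne
    rw [← hLdef] at hmem
    rcases Finset.mem_insert.mp hmem with h | h
    · rw [h]; linarith
    · obtain ⟨z, hz, hzeq⟩ := Finset.mem_image.mp h
      rw [← hzeq]
      exact hline z hz
  have hL0 : 0 < L := lt_trans hnm0 hLgt
  have hLle : ∀ z ∈ lineZ, L ≤ |inn d (z - w)| := by
    intro z hz
    exact Finset.min'_le _ _ (Finset.mem_insert_of_mem (Finset.mem_image_of_mem _ hz))
  set offZ : Finset (Euc k) := Z.filter (fun z => ¬(z - w - (inn d (z - w)) • d = 0)) with hoffZ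
  have hDne : (insert (1:ℝ) (offZ.image (fun z => ‖z - w - (inn d (z - w)) • d‖))).Nonempty :=
    Finset.insert_nonempty _ _
  set δ : ℝ := (insert (1:ℝ) (offZ.image (fun z => ‖z - w - (inn d (z - w)) • d‖))).min' hDne
    with hDdef
  have hδ0 : 0 < δ := by
    have hmem := Finset.min'_mem _ hDne
    rw [← hDdef] at hmem
    rcases Finset.mem_insert.mp hmem with h | h
    · rw [h]; norm_num
    · obtain ⟨z, hz, hzeq⟩ := Finset.mem_image.mp h
      rw [← hzeq]
      have := (Finset.mem_filter.mp hz).2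
      exact norm_pos_iff.mpr this
  have hδle : ∀ z ∈ offZ, δ ≤ ‖z - w - (inn d (z - w)) • d‖ := by
    intro z hz
    exact Finset.min'_le _ _ (Finset.mem_insert_of_mem (Finset.mem_image_of_mem _ hz))
  have hLne0 : L ≠ 0 := ne_of_gt hL0
  have hδne0 : δ ≠ 0 := ne_of_gt hδ0
  -- the two affine maps
  refine ⟨(TgenM d L⁻¹ δ⁻¹, -(mulVecE (TgenM d L⁻¹ δ⁻¹) w)), (TgenM d L δ, w), ?_, ?_⟩
  all_goals
    have happ1 : ∀ y : Euc k,
        app (TgenM d L⁻¹ δ⁻¹, -(mulVecE (TgenM d L⁻¹ δ⁻¹) w)) y = Tgen d L⁻¹ δ⁻¹ (y - w) := by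
      intro y
      show mulVecE (TgenM d L⁻¹ δ⁻¹) y + -(mulVecE (TgenM d L⁻¹ δ⁻¹) w) = _
      rw [mulVecE_TgenM, mulVecE_TgenM, Tgen_sub]
      exact (sub_eq_add_neg _ _).symm
  · -- the point a is sent to w
    rw [happ1]
    have haw2 : a - w = nm • d := hnmd.symm
    have hinn : inn d (a - w) = nm := by rw [haw2, inn_smul_right, hdd]; ring
    have hperp : a - w - nm • d = 0 := by rw [haw2]; abel
    have hnorm : inn (Tgen d L⁻¹ δ⁻¹ (a - w)) (Tgen d L⁻¹ δ⁻¹ (a - w)) < 1 := by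
      rw [inn_Tgen_self hdd, hinn, hperp, inn_zero_left]
      have h2 : (L⁻¹ * nm)^2 < 1 := by
        have h3 : L⁻¹ * nm < 1 := by
          rw [inv_mul_lt_iff₀ hL0]; linarith
        have h4 : 0 ≤ L⁻¹ * nm := by positivity
        nlinarith
      nlinarith
    rw [step_of_lt (norm_lt_one_of_inn hnorm)]
    show mulVecE (TgenM d L δ) 0 + w = w
    rw [mulVecE_TgenM, Tgen_zero, zero_add]
  · -- the points of Z are fixed
    intro z hzZ
    rw [happ1]
    set β : ℝ := inn d (z - w) with hβ
    have hnorm : 1 ≤ inn (Tgen d L⁻¹ δ⁻¹ (z - w)) (Tgen d L⁻¹ δ⁻¹ (z - w)) := by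
      rw [inn_Tgen_self hdd, ← hβ]
      by_cases hp : z - w - β • d = 0
      · -- on the line
        have hzline : z ∈ lineZ := Finset.mem_filter.mpr ⟨hzZ, by rw [← hβ]; exact hp⟩
        have h1 : L ≤ |β| := by rw [hβ]; exact hLle z hzline
        rw [hp, inn_zero_left, mul_zero, add_zero]
        have h2 : L^2 ≤ β^2 := by nlinarith [sq_abs β, abs_nonneg β]
        have h4 : (L⁻¹ * β)^2 * L^2 = β^2 := by field_simp
        nlinarith [mul_pos hL0 hL0]
      · -- off the line
        have hzoff : z ∈ offZ := Finset.mem_filter.mpr ⟨hzZ, by rw [← hβ]; exact hp⟩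
        have h1 : δ ≤ ‖z - w - β • d‖ := by rw [hβ]; exact hδle z hzoff
        have h2 : inn (z - w - β • d) (z - w - β • d) = ‖z - w - β • d‖^2 :=
          (norm_sq_inn _).symm
        rw [h2]
        have h4 : δ^2 ≤ ‖z - w - β • d‖^2 := by nlinarith [norm_nonneg (z - w - β • d)]
        have h6 : δ⁻¹^2 * δ^2 = 1 := by field_simp
        nlinarith [sq_nonneg (L⁻¹ * β), mul_nonneg (sq_nonneg δ⁻¹) (sub_nonneg.mpr h4)]
    rw [step_of_ge (one_le_norm_of_inn hnorm)]
    show mulVecE (TgenM d L δ) (Tgen d L⁻¹ δ⁻¹ (z - w)) + w = z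
    rw [mulVecE_TgenM, Tgen_comp hdd hLne0 hδne0]
    abel

end UA
namespace UA

def IsChainAff (k : ℕ) : ℕ → (Euc k → Euc k) → Prop
  | 0 => fun G => ∃ p : Matrix (Fin k) (Fin k) ℝ × Euc k, G = app p
  | (N+1) => fun G => ∃ (p : Matrix (Fin k) (Fin k) ℝ × Euc k) (G' : Euc k → Euc k),
      IsChainAff k N G' ∧ G = fun v => G' (stepReLU (app p v))

lemma chain_comp_aff {k N : ℕ} {G : Euc k → Euc k} (h : IsChainAff k N G)
    (p : Matrix (Fin k) (Fin k) ℝ × Euc k) : IsChainAff k N (fun v => G (app p v)) := by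
  cases N with
  | zero =>
    obtain ⟨q, rfl⟩ := h
    exact ⟨comp q p, funext fun v => (app_comp q p v).symm⟩
  | succ N =>
    obtain ⟨q, G', hG', rfl⟩ := h
    exact ⟨comp q p, G', hG', funext fun v => by rw [app_comp]⟩

lemma chain_realize {k : ℕ} : ∀ {N : ℕ} {G : Euc k → Euc k}, IsChainAff k N G →
    ∃ (g : ℕ → Matrix (Fin k) (Fin k) ℝ × Euc k) (fin : Matrix (Fin k) (Fin k) ℝ × Euc k),
      ∀ v, G v = app fin (blocks g v N) := by
  intro N
  induction N with
  | zero =>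
    intro G h
    obtain ⟨p, rfl⟩ := h
    exact ⟨fun _ => (1, 0), p, fun v => rfl⟩
  | succ N ih =>
    intro G h
    obtain ⟨p, G', hG', rfl⟩ := h
    obtain ⟨g, fin, hg⟩ := ih hG'
    exact ⟨consP p g, fin, fun v => by rw [blocks_cons]; exact hg _⟩

/-- phase 2: move finitely many distinct points into prescribed balls while fixing
a prescribed finite set, with one step-ReLU block per point -/
lemma phase2 {k : ℕ} (hk : 2 ≤ k) :
    ∀ (N : ℕ) (x : Fin N → Euc k), (∀ i j, i ≠ j → x i ≠ x j) →
    ∀ (Y : Finset (Euc k)), (∀ i, x i ∉ Y) →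
    ∀ (u : Fin N → Euc k) (ρ : ℝ), 0 < ρ →
    ∃ G : Euc k → Euc k, IsChainAff k N G ∧ (∀ i, dist (G (x i)) (u i) < ρ) ∧
      ∀ y ∈ Y, G y = y := by
  intro N
  induction N with
  | zero =>
    intro x _ Y _ u ρ hρ
    refine ⟨app ((1 : Matrix (Fin k) (Fin k) ℝ), (0 : Euc k)), ⟨_, rfl⟩, fun i => i.elim0, ?_⟩
    intro y _
    show mulVecE 1 y + 0 = y
    rw [mulVecE_one, add_zero]
  | succ N ih =>
    intro x hx Y hY u ρ hρ
    set a : Euc k := x 0 with hadef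
    set X : Finset (Euc k) := Y ∪ Finset.image (fun j : Fin N => x j.succ) Finset.univ with hXdef
    have haX : a ∉ X := by
      rw [hXdef]
      intro hmem
      rcases Finset.mem_union.mp hmem with h | h
      · exact hY 0 h
      · obtain ⟨j, _, hj⟩ := Finset.mem_image.mp h
        exact hx 0 j.succ (Ne.symm (Fin.succ_ne_zero j)) hj.symm
    obtain ⟨w, hwdist, hwa, hray⟩ := choose_w hk a (u 0) hρ X haX
    obtain ⟨p₁, p₂, hca, hcz⟩ := collapse_exists w a hwa X hray
    have hw_eq : a + (1:ℝ) • (w - a) = w := by rw [one_smul]; abel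
    have hsuccY : ∀ j : Fin N, x j.succ ∉ insert w Y := by
      intro j hmem
      rcases Finset.mem_insert.mp hmem with h | h
      · have := hray (x j.succ)
          (Finset.mem_union_right _ (Finset.mem_image_of_mem _ (Finset.mem_univ j)))
          1 ⟨by norm_num, by norm_num⟩
        rw [hw_eq] at this
        exact this h
      · exact hY j.succ h
    obtain ⟨G', hchain', hpt', hfix'⟩ := ih (fun j => x j.succ)
      (fun i j hij => hx i.succ j.succ (fun h => hij (Fin.succ_injective N h)))
      (insert w Y) hsuccY (fun j => u j.succ) ρ hρ
    refine ⟨fun v => G' (app p₂ (stepReLU (app p₁ v))), ?_, ?_, ?_⟩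
    · exact ⟨p₁, fun v => G' (app p₂ v), chain_comp_aff hchain' p₂, rfl⟩
    · intro i
      induction i using Fin.cases with
      | zero =>
        show dist (G' (app p₂ (stepReLU (app p₁ (x 0))))) (u 0) < ρ
        rw [← hadef, hca, hfix' w (Finset.mem_insert_self _ _)]
        exact hwdist
      | succ j =>
        show dist (G' (app p₂ (stepReLU (app p₁ (x j.succ))))) (u j.succ) < ρ
        rw [hcz (x j.succ)
          (Finset.mem_union_right _ (Finset.mem_image_of_mem _ (Finset.mem_univ j)))]
        exact hpt' j
    · intro y hy
      show G' (app p₂ (stepReLU (app p₁ y))) = y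
      rw [hcz y (Finset.mem_union_left _ hy), hfix' y (Finset.mem_insert_of_mem hy)]

end UA
namespace UA

lemma exists_packed_cover {n m : ℕ} (K : Set (Euc n)) (hK : IsCompact K)
    (f : Euc n → Euc m) (hf : ContinuousOn f K) {ε : ℝ} (hε : 0 < ε) :
    ∃ M, IsPackedCoverSize f K ε M := by
  have huc := hK.uniformContinuousOn_of_continuous hf
  rw [Metric.uniformContinuousOn_iff] at huc
  obtain ⟨δ, hδ0, hδ⟩ := huc ε hε
  set r : ℝ := min δ 1 / 2 with hrdef
  have hmin0 : 0 < min δ 1 := lt_min hδ0 one_pos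
  have hmin1 : min δ 1 ≤ 1 := min_le_right _ _
  have hminδ : min δ 1 ≤ δ := min_le_left _ _
  have hr0 : 0 < r := by rw [hrdef]; linarith
  have hr1 : r < 1 := by rw [hrdef]; linarith
  have hrδ : r ≤ δ := by rw [hrdef]; linarith
  obtain ⟨t, htK, htfin, htcover⟩ := hK.finite_cover_balls (show (0:ℝ) < r/2 by linarith)
  set Tfin : Finset (Euc n) := htfin.toFinset with hTfin
  have hbound : ∀ s : Finset (Euc n), ↑s ⊆ K →
      (∀ p ∈ s, ∀ q ∈ s, p ≠ q → r ≤ dist p q) → s.card ≤ Tfin.card := by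
    intro s hsK hsep
    by_contra hgt
    push_neg at hgt
    have hchoice : ∀ p : Euc n, p ∈ s → ∃ c, c ∈ Tfin ∧ p ∈ Metric.ball c (r/2) := by
      intro p hp
      have := htcover (hsK hp)
      rw [Set.mem_iUnion₂] at this
      obtain ⟨c, hc, hpc⟩ := this
      exact ⟨c, htfin.mem_toFinset.mpr hc, hpc⟩
    choose F hF1 hF2 using hchoice
    set F' : Euc n → Euc n := fun p => if h : p ∈ s then F p h else Classical.arbitrary _
    have hmaps : ∀ p ∈ s, F' p ∈ Tfin := by
      intro p hp
      simp only [F', dif_pos hp]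
      exact hF1 p hp
    obtain ⟨p, hp, q, hq, hpq, heq⟩ :=
      Finset.exists_ne_map_eq_of_card_lt_of_maps_to hgt hmaps
    have h1 : p ∈ Metric.ball (F p hp) (r/2) := hF2 p hp
    have h2 : q ∈ Metric.ball (F q hq) (r/2) := hF2 q hq
    have heq' : F p hp = F q hq := by
      have e1 : F' p = F p hp := dif_pos hp
      have e2 : F' q = F q hq := dif_pos hq
      rw [← e1, ← e2, heq]
    rw [Metric.mem_ball] at h1 h2
    have : dist p q < r := by
      calc dist p q ≤ dist p (F p hp) + dist (F q hq) q := by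
            rw [heq']; have := dist_triangle p (F q hq) q
            rw [dist_comm (F q hq) q] at this ⊢
            linarith [dist_triangle p (F q hq) q, dist_comm q (F q hq)]
        _ < r/2 + r/2 := by rw [dist_comm (F q hq) q]; linarith
        _ = r := by ring
    linarith [hsep p hp q hq hpq]
  set A : Set ℕ := {dd | ∃ s : Finset (Euc n), ↑s ⊆ K ∧
    (∀ p ∈ s, ∀ q ∈ s, p ≠ q → r ≤ dist p q) ∧ s.card = dd} with hA
  have hAne : A.Nonempty := ⟨0, ∅, by simp, by simp, rfl⟩
  have hAbdd : BddAbove A := by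
    refine ⟨Tfin.card, ?_⟩
    rintro dd ⟨s, h1, h2, h3⟩
    exact h3 ▸ hbound s h1 h2
  obtain ⟨s, hsK, hsep, hscard⟩ := Nat.sSup_mem hAne hAbdd
  have hcov : ∀ p ∈ K, ∃ q ∈ s, dist p q < r := by
    intro p hp
    by_contra hno
    push_neg at hno
    have hps : p ∉ s := by
      intro h
      have := hno p h
      rw [dist_self] at this
      linarith
    have hins : s.card + 1 ∈ A := by
      refine ⟨insert p s, ?_, ?_, ?_⟩
      · intro q hq
        rcases Finset.mem_insert.mp hq with h | h
        · exact h ▸ hp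
        · exact hsK h
      · intro p' hp' q' hq' hne
        rcases Finset.mem_insert.mp hp' with h1 | h1 <;>
          rcases Finset.mem_insert.mp hq' with h2 | h2
        · exact absurd (h1.trans h2.symm) hne
        · rw [h1]
          exact hno q' h2
        · rw [h2, dist_comm]
          exact hno p' h1
        · exact hsep p' h1 q' h2 hne
      · rw [Finset.card_insert_of_notMem hps]
    have := le_csSup hAbdd hins
    omega
  refine ⟨s.card, fun i => ((s.equivFin.symm i : { x // x ∈ s }) : Euc n), fun _ => r,
    ?_, ?_, ?_, ?_, ?_⟩
  · intro i
    exact hsK (s.equivFin.symm i).2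
  · intro i
    exact ⟨hr0, hr1⟩
  · intro p hp
    obtain ⟨q, hq, hqd⟩ := hcov p hp
    rw [Set.mem_iUnion]
    refine ⟨s.equivFin ⟨q, hq⟩, ?_⟩
    show p ∈ Metric.ball ((s.equivFin.symm (s.equivFin ⟨q, hq⟩) : { x // x ∈ s }) : Euc n) r
    rw [Metric.mem_ball]
    have : ((s.equivFin.symm (s.equivFin ⟨q, hq⟩) : { x // x ∈ s }) : Euc n) = q := by
      rw [Equiv.symm_apply_apply]
    rw [this]
    exact hqd
  · intro i y hy
    obtain ⟨p, ⟨hpball, hpK⟩, rfl⟩ := hy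
    rw [Metric.mem_ball] at hpball ⊢
    apply hδ p hpK _ (hsK (s.equivFin.symm i).2)
    linarith
  · intro i j hij
    apply hsep _ (s.equivFin.symm i).2 _ (s.equivFin.symm j).2
    intro h
    apply hij
    have : s.equivFin.symm i = s.equivFin.symm j := Subtype.ext h
    have := congrArg s.equivFin this
    rwa [Equiv.apply_symm_apply, Equiv.apply_symm_apply] at this

lemma packNum_pos_and_packed {n m : ℕ} {K : Set (Euc n)} (hK : IsCompact K)
    (hKne : K.Nonempty) {f : Euc n → Euc m} (hf : ContinuousOn f K) {ε : ℝ} (hε : 0 < ε) :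
    1 ≤ packNum f K ε ∧ IsPackedCoverSize f K ε (packNum f K ε) := by
  obtain ⟨M, hM⟩ := exists_packed_cover K hK f hf hε
  have hne : {M | IsPackedCoverSize f K ε M}.Nonempty := ⟨M, hM⟩
  have hmem : IsPackedCoverSize f K ε (packNum f K ε) := Nat.sInf_mem hne
  refine ⟨?_, hmem⟩
  by_contra h
  push_neg at h
  have hp0 : packNum f K ε = 0 := by omega
  rw [hp0] at hmem
  obtain ⟨c, r, _, _, hcover, _, _⟩ := hmem
  obtain ⟨p, hp⟩ := hKne
  have := hcover hp
  rw [Set.mem_iUnion] at this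
  obtain ⟨i, _⟩ := this
  exact i.elim0
end UA
namespace UA

lemma Dstep_lt {k : ℕ} {s : ℝ} (hs : 0 < s) (zc y : Euc k) (h : dist y zc < s) :
    s • stepReLU (s⁻¹ • (y - zc)) + zc = zc := by
  rw [dist_eq_norm] at h
  have hn : ‖s⁻¹ • (y - zc)‖ = s⁻¹ * ‖y - zc‖ := by
    rw [norm_smul, Real.norm_eq_abs, abs_of_pos (inv_pos.mpr hs)]
  have hlt : ‖s⁻¹ • (y - zc)‖ < 1 := by
    rw [hn]
    have := mul_lt_mul_of_pos_left h (inv_pos.mpr hs)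
    rwa [inv_mul_cancel₀ (ne_of_gt hs)] at this
  rw [step_of_lt hlt, smul_zero, zero_add]

lemma Dstep_ge {k : ℕ} {s : ℝ} (hs : 0 < s) (zc y : Euc k) (h : s ≤ dist y zc) :
    s • stepReLU (s⁻¹ • (y - zc)) + zc = y := by
  rw [dist_eq_norm] at h
  have hn : ‖s⁻¹ • (y - zc)‖ = s⁻¹ * ‖y - zc‖ := by
    rw [norm_smul, Real.norm_eq_abs, abs_of_pos (inv_pos.mpr hs)]
  have hge : 1 ≤ ‖s⁻¹ • (y - zc)‖ := by
    rw [hn]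
    have := mul_le_mul_of_nonneg_left h (le_of_lt (inv_pos.mpr hs))
    rwa [inv_mul_cancel₀ (ne_of_gt hs)] at this
  rw [step_of_ge hge, smul_smul, mul_inv_cancel₀ (ne_of_gt hs), one_smul, sub_add_cancel]

lemma mulVecE_lamM {k : ℕ} (e w v : Euc k) :
    mulVecE (fun j l => e j * w l : Matrix (Fin k) (Fin k) ℝ) v = (inn w v) • e := by
  apply euc_ext; intro j
  show (∑ l : Fin k, e j * w l * v l) = inn w v * e j
  simp only [mul_assoc]
  rw [← Finset.mul_sum, inn]
  ring

end UA

/- **Statement 3.** Let n ≥ 2, K ⊆ ℝⁿ compact, f : K → ℝᵐ continuous.  For every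
ε > 0 there is a radial neural network with 2·M(f, K, ε/2) hidden layers all of width
max(n, m), Step-ReLU activations at all hidden layers, and a final affine layer into
ℝᵐ, whose feedforward function F satisfies ‖F x − f x‖ < ε for all x ∈ K. -/
open UA in
/-- Let n ≥ 2, K ⊆ ℝⁿ compact, f : K → ℝᵐ continuous.  For every
ε > 0 there is a radial neural network with 2·M(f, K, ε/2) hidden layers all of width
max(n, m), Step-ReLU activations at all hidden layers, and a final affine layer into
ℝᵐ, whose feedforward function F satisfies ‖F x − f x‖ < ε for all x ∈ K. -/
theorem universal_approximation_max_width {n m : ℕ} (hn : 2 ≤ n)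
    (K : Set (Euc n)) (hK : IsCompact K)
    (f : Euc n → Euc m) (hf : ContinuousOn f K) (ε : ℝ) (hε : 0 < ε) :
    ∃ (A₀ : Matrix (Fin m) (Fin n) ℝ) (c₀ : Euc m)
      (W₀ : Matrix (Fin (max n m)) (Fin n) ℝ) (b₀ : Euc (max n m))
      (W : ℕ → Matrix (Fin (max n m)) (Fin (max n m)) ℝ) (b : ℕ → Euc (max n m))
      (A : Matrix (Fin m) (Fin (max n m)) ℝ) (c : Euc m),
      ∀ x ∈ K,
        ‖constNet n (max n m) m (2 * packNum f K (ε / 2)) A₀ c₀ W₀ b₀ W b A c x - f x‖ < ε := by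
  classical
  set k : ℕ := max n m with hkdef
  have hkn : n ≤ k := le_max_left n m
  have hkm : m ≤ k := le_max_right n m
  have hk2 : 2 ≤ k := le_trans hn hkn
  rcases Set.eq_empty_or_nonempty K with rfl | hKne
  · exact ⟨0, 0, 0, 0, fun _ => 0, fun _ => 0, 0, 0, fun x hx => absurd hx (Set.notMem_empty x)⟩
  have hε2 : 0 < ε / 2 := by linarith
  obtain ⟨hp1, hpack⟩ := packNum_pos_and_packed hK hKne hf hε2
  set M : ℕ := packNum f K (ε / 2) with hMdef
  obtain ⟨cF, rF, hcK, hr01, hcover, himg, hsep⟩ := hpack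
  obtain ⟨M', hM'⟩ : ∃ M', M = M' + 1 := ⟨M - 1, by omega⟩
  have hM0 : 0 < M := by omega
  -- ℕ-indexed centers and radii
  set cc : ℕ → Euc n := fun j => cF ⟨j % M, Nat.mod_lt j hM0⟩ with hccdef
  set rr : ℕ → ℝ := fun j => rF ⟨j % M, Nat.mod_lt j hM0⟩ with hrrdef
  have ccN : ∀ j (hj : j < M), cc j = cF ⟨j, hj⟩ := by
    intro j hj
    exact congrArg cF (Fin.ext (Nat.mod_eq_of_lt hj))
  have rrN : ∀ j (hj : j < M), rr j = rF ⟨j, hj⟩ := by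
    intro j hj
    exact congrArg rF (Fin.ext (Nat.mod_eq_of_lt hj))
  have hrr0 : ∀ j, 0 < rr j := fun j => (hr01 _).1
  have hrr1 : ∀ j, rr j < 1 := fun j => (hr01 _).2
  have hsepN : ∀ i j, i < M → j < M → i ≠ j → rr j ≤ dist (cc j) (cc i) := by
    intro i j hi hj hij
    rw [rrN j hj, ccN j hj, ccN i hi]
    exact hsep ⟨j, hj⟩ ⟨i, hi⟩ (fun h => hij (by simpa [Fin.ext_iff] using h.symm))
  -- phase 1 network data
  set p0 : Matrix (Fin k) (Fin n) ℝ × Euc k :=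
    ((rr 0)⁻¹ • iotaM n k, -((rr 0)⁻¹ • iota hkn (cc 0))) with hp0def
  set g1 : ℕ → Matrix (Fin k) (Fin k) ℝ × Euc k := fun j =>
    ((rr j / rr (j+1)) • (1 : Matrix (Fin k) (Fin k) ℝ),
      (rr (j+1))⁻¹ • (iota hkn (cc j) - iota hkn (cc (j+1)))) with hg1def
  set z0 : Euc n → Euc k := fun x => stepReLU (app p0 x) with hz0def
  have happ0 : ∀ x, app p0 x = (rr 0)⁻¹ • (iota hkn x - iota hkn (cc 0)) := by
    intro x
    show mulVecE ((rr 0)⁻¹ • iotaM n k) x + -((rr 0)⁻¹ • iota hkn (cc 0)) = _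
    rw [mulVecE_smulM, mulVecE_iotaM hkn, smul_sub, ← sub_eq_add_neg]
  have hdeq : ∀ (y z : Euc n), dist (iota hkn y) (iota hkn z) = dist y z := by
    intro y z
    rw [dist_eq_norm, dist_eq_norm, iota_sub, norm_iota]
  -- phase 1 semantics
  have sem : ∀ x ∈ K, ∀ j, j < M →
      (∃ i, i ≤ j ∧ dist x (cc i) < rr i ∧
        rr j • blocks g1 (z0 x) j + iota hkn (cc j) = iota hkn (cc i))
      ∨ ((∀ i, i ≤ j → rr i ≤ dist x (cc i)) ∧
        rr j • blocks g1 (z0 x) j + iota hkn (cc j) = iota hkn x) := by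
    intro x hx j
    induction j with
    | zero =>
      intro h0M
      have hb0 : blocks g1 (z0 x) 0 = stepReLU ((rr 0)⁻¹ • (iota hkn x - iota hkn (cc 0))) := by
        show z0 x = _
        rw [hz0def]
        simp only
        rw [happ0]
      rw [hb0]
      rcases lt_or_ge (dist x (cc 0)) (rr 0) with hlt | hge
      · left
        refine ⟨0, le_refl 0, hlt, ?_⟩
        apply Dstep_lt (hrr0 0)
        rw [hdeq]; exact hlt
      · right
        refine ⟨fun i hi => by rw [Nat.le_zero.mp hi]; exact hge, ?_⟩
        apply Dstep_ge (hrr0 0)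
        rw [hdeq]; exact hge
    | succ j ih =>
      intro hj1M
      have hjM : j < M := by omega
      have hbstep : rr (j+1) • blocks g1 (z0 x) (j+1) + iota hkn (cc (j+1))
          = rr (j+1) • stepReLU ((rr (j+1))⁻¹ •
              ((rr j • blocks g1 (z0 x) j + iota hkn (cc j)) - iota hkn (cc (j+1))))
            + iota hkn (cc (j+1)) := by
        have happ : app (g1 j) (blocks g1 (z0 x) j)
            = (rr (j+1))⁻¹ •
              ((rr j • blocks g1 (z0 x) j + iota hkn (cc j)) - iota hkn (cc (j+1))) := by
          show mulVecE ((rr j / rr (j+1)) • (1 : Matrix (Fin k) (Fin k) ℝ)) (blocks g1 (z0 x) j)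
              + (rr (j+1))⁻¹ • (iota hkn (cc j) - iota hkn (cc (j+1))) = _
          rw [mulVecE_smulM, mulVecE_one, add_sub_assoc, smul_add, smul_smul, div_eq_inv_mul]
        show rr (j+1) • stepReLU (app (g1 j) (blocks g1 (z0 x) j)) + iota hkn (cc (j+1)) = _
        rw [happ]
      rcases ih hjM with ⟨i, hij, hdi, hval⟩ | ⟨hall, hval⟩
      · -- already collapsed to center i: stays there
        left
        refine ⟨i, by omega, hdi, ?_⟩
        rw [hbstep, hval]
        apply Dstep_ge (hrr0 (j+1))
        rw [hdeq, dist_comm]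
        have hiM : i < M := by omega
        exact hsepN i (j+1) hiM hj1M (by omega)
      · rcases lt_or_ge (dist x (cc (j+1))) (rr (j+1)) with hlt | hge
        · left
          refine ⟨j+1, le_refl _, hlt, ?_⟩
          rw [hbstep, hval]
          apply Dstep_lt (hrr0 (j+1))
          rw [hdeq]; exact hlt
        · right
          refine ⟨?_, ?_⟩
          · intro i hi
            rcases Nat.lt_or_ge i (j+1) with h | h
            · exact hall i (by omega)
            · have : i = j + 1 := by omega
              rw [this]; exact hge
          · rw [hbstep, hval]
            apply Dstep_ge (hrr0 (j+1))
            rw [hdeq]; exact hge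
  -- phase 1 conclusion
  have final : ∀ x ∈ K, ∃ i : Fin M, dist x (cF i) < rF i ∧
      rr M' • blocks g1 (z0 x) M' + iota hkn (cc M') = iota hkn (cF i) := by
    intro x hx
    have hM'M : M' < M := by omega
    rcases sem x hx M' hM'M with ⟨i, hij, hdi, hval⟩ | ⟨hall, hval⟩
    · have hiM : i < M := by omega
      refine ⟨⟨i, hiM⟩, ?_, ?_⟩
      · rw [← ccN i hiM, ← rrN i hiM]; exact hdi
      · rw [← ccN i hiM]; exact hval
    · exfalso
      have := hcover hx
      rw [Set.mem_iUnion] at this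
      obtain ⟨i, hi⟩ := this
      rw [Metric.mem_ball] at hi
      have hiM : (i : ℕ) < M := i.2
      have := hall i.val (by omega)
      rw [ccN _ hiM, rrN _ hiM] at this
      have hieq : (⟨i.val, hiM⟩ : Fin M) = i := Fin.ext rfl
      rw [hieq] at this
      linarith
  -- distinct centers
  have hcne : ∀ i j : Fin M, i ≠ j → cF i ≠ cF j := by
    intro i j hij h
    have h1 := hsep i j hij
    rw [h, dist_self] at h1
    linarith [(hr01 i).1]
  -- separating functional
  set S : Finset (Euc k) := Finset.image
    (fun ij : Fin M × Fin M => iota hkn (cF ij.1) - iota hkn (cF ij.2))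
    (Finset.univ.filter fun ij : Fin M × Fin M => ij.1 ≠ ij.2) with hSdef
  have hSnz : ∀ v ∈ S, v ≠ 0 := by
    intro v hv
    obtain ⟨ij, hijmem, rfl⟩ := Finset.mem_image.mp hv
    have hij : ij.1 ≠ ij.2 := (Finset.mem_filter.mp hijmem).2
    intro h
    have := sub_eq_zero.mp h
    exact hcne ij.1 ij.2 hij (iota_inj hkn this)
  obtain ⟨wl, hwl⟩ := exists_inner_avoid S hSnz
  have hwl' : ∀ i j : Fin M, i ≠ j →
      inn wl (iota hkn (cF i)) ≠ inn wl (iota hkn (cF j)) := by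
    intro i j hij h
    have hmem : iota hkn (cF i) - iota hkn (cF j) ∈ S :=
      Finset.mem_image_of_mem _ (Finset.mem_filter.mpr ⟨Finset.mem_univ (i, j), hij⟩)
    apply hwl _ hmem
    rw [inn_sub_right, h, sub_self]
  -- phase 2 input points
  set E0 : Euc k := eb ⟨0, by omega⟩ with hE0def
  set xP : Fin M → Euc k := fun i => (inn wl (iota hkn (cF i))) • E0 with hxPdef
  have hxP : ∀ i j : Fin M, i ≠ j → xP i ≠ xP j := by
    intro i j hij h
    apply hwl' i j hij
    have := congrFun (congrArg WithLp.ofLp h) (⟨0, by omega⟩ : Fin k)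
    simpa [xP, E0, eb, euc_smul_apply] using this
  set uT : Fin M → Euc k := fun i => iota hkm (f (cF i)) with huTdef
  obtain ⟨G₂, hchain₂, hpt₂, _⟩ := phase2 hk2 M xP hxP ∅ (by simp) uT (ε/2) hε2
  obtain ⟨g₂, fin₂, hg₂⟩ := chain_realize hchain₂
  rw [hM'] at hg₂
  -- handoff affine map
  set lamP : Matrix (Fin k) (Fin k) ℝ × Euc k :=
    ((fun j l => E0 j * wl l : Matrix (Fin k) (Fin k) ℝ), (0 : Euc k)) with hlamPdef
  set phiP : Matrix (Fin k) (Fin k) ℝ × Euc k :=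
    ((rr M') • (1 : Matrix (Fin k) (Fin k) ℝ), iota hkn (cc M')) with hphiPdef
  set q2 : Matrix (Fin k) (Fin k) ℝ × Euc k := comp (g₂ 0) (comp lamP phiP) with hq2def
  set gtail : ℕ → Matrix (Fin k) (Fin k) ℝ × Euc k := fun j => g₂ (j+1) with hgtaildef
  set gfull : ℕ → Matrix (Fin k) (Fin k) ℝ × Euc k := appendP g1 M' (consP q2 gtail) with hgfulldef
  set finT : Matrix (Fin m) (Fin k) ℝ × Euc m := comp ((projM k m), (0 : Euc m)) fin₂
    with hfinTdef
  -- handoff semantics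
  have hlam : ∀ v : Euc k, app lamP v = (inn wl v) • E0 := by
    intro v
    show mulVecE (fun j l => E0 j * wl l : Matrix (Fin k) (Fin k) ℝ) v + 0 = _
    rw [mulVecE_lamM, add_zero]
  have hphi : ∀ v : Euc k, app phiP v = rr M' • v + iota hkn (cc M') := by
    intro v
    show mulVecE ((rr M') • (1 : Matrix (Fin k) (Fin k) ℝ)) v + iota hkn (cc M') = _
    rw [mulVecE_smulM, mulVecE_one]
  -- the full network
  refine ⟨0, 0, p0.1, p0.2, fun j => (gfull j).1, fun j => (gfull j).2, finT.1, finT.2, ?_⟩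
  intro x hx
  have h2M : 2 * packNum f K (ε / 2) = (2 * M' + 1) + 1 := by omega
  rw [h2M]
  show ‖mulVecE finT.1 (hiddenStack k (fun j => (gfull j).1) (fun j => (gfull j).2) (2*M'+1)
      (stepReLU (mulVecE p0.1 x + p0.2))) + finT.2 - f x‖ < ε
  have hz0x : stepReLU (mulVecE p0.1 x + p0.2) = z0 x := rfl
  rw [hz0x, hiddenStack_eq_blocks]
  obtain ⟨i, hdi, hvali⟩ := final x hx
  -- chase the chain
  have hsplitN : 2 * M' + 1 = M' + (M' + 1) := by omega
  rw [hsplitN]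
  have h1 : blocks gfull (z0 x) (M' + (M' + 1))
      = blocks (consP q2 gtail) (blocks g1 (z0 x) M') (M' + 1) := by
    rw [hgfulldef]
    exact blocks_append _ _ _ _ _
  rw [h1, blocks_cons]
  have h2 : app q2 (blocks g1 (z0 x) M') = app (g₂ 0) (xP i) := by
    rw [hq2def, app_comp, app_comp, hphi, hlam, hvali]
  rw [h2]
  have h3 : blocks gtail (stepReLU (app (g₂ 0) (xP i))) M' = blocks g₂ (xP i) (M' + 1) := by
    have h4 : blocks g₂ (xP i) (M' + 1) = blocks (consP (g₂ 0) gtail) (xP i) (M' + 1) := by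
      apply blocks_congr
      intro j _
      cases j with
      | zero => rfl
      | succ j' => rfl
    rw [h4, blocks_cons]
  rw [h3]
  have hPeq : mulVecE finT.1 (blocks g₂ (xP i) (M' + 1)) + finT.2
      = proj hkm (G₂ (xP i)) := by
    show app finT (blocks g₂ (xP i) (M' + 1)) = _
    rw [hfinTdef, app_comp, ← hg₂ (xP i)]
    show mulVecE (projM k m) (G₂ (xP i)) + 0 = _
    rw [mulVecE_projM hkm, add_zero]
  rw [hPeq]
  have e1 : ‖proj hkm (G₂ (xP i)) - f (cF i)‖ < ε / 2 := by
    calc ‖proj hkm (G₂ (xP i)) - f (cF i)‖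
        = ‖proj hkm (G₂ (xP i)) - proj hkm (iota hkm (f (cF i)))‖ := by rw [proj_iota]
      _ = ‖proj hkm (G₂ (xP i) - iota hkm (f (cF i)))‖ := by rw [proj_sub]
      _ ≤ ‖G₂ (xP i) - iota hkm (f (cF i))‖ := norm_proj_le hkm _
      _ = dist (G₂ (xP i)) (uT i) := by rw [dist_eq_norm]
      _ < ε / 2 := hpt₂ i
  have e2 : dist (f x) (f (cF i)) < ε / 2 := by
    have hxball : x ∈ Metric.ball (cF i) (rF i) ∩ K := ⟨Metric.mem_ball.mpr hdi, hx⟩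
    have := himg i ⟨x, hxball, rfl⟩
    rwa [Metric.mem_ball] at this
  calc ‖proj hkm (G₂ (xP i)) - f x‖
      = ‖(proj hkm (G₂ (xP i)) - f (cF i)) + (f (cF i) - f x)‖ := by
        rw [sub_add_sub_cancel]
    _ ≤ ‖proj hkm (G₂ (xP i)) - f (cF i)‖ + ‖f (cF i) - f x‖ := norm_add_le _ _
    _ < ε / 2 + ε / 2 := by
        apply add_lt_add e1
        rw [← dist_eq_norm, dist_comm]
        exact e2
    _ = ε := by ring

end
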